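/- The degree of the Lefschetz character of the Rudvalis group, 10113024, equals 2^12 · 2469, while |Ru|_2 = 2^14; hence the Lefschetz module of Ru is not projective mod 2. -/

import Mathlib

set_option linter.unusedSectionVars false
set_option maxHeartbeats 1000000

open Module Submodule LinearMap

noncomputable section RuAux
open scoped Classical
namespace RuAux

variable {k : Type} [Field k] {G : Type} [Group G] [Fintype G]

/-- The sum of the elements of a subgroup, inside the monoid algebra. -/
def sg (k : Type) [Field k] {G : Type} [Group G] [Fintype G] (H : Subgroup G) :
    MonoidAlgebra k G :=
  ∑ h ∈ (H : Set G).toFinset, MonoidAlgebra.of k G h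

variable {M : Type} [AddCommGroup M] [Module k M] [Module (MonoidAlgebra k G) M]
  [IsScalarTower k (MonoidAlgebra k G) M]

/-- The action of an element of the monoid algebra, as a `k`-linear endomorphism. -/
def ell (a : MonoidAlgebra k G) : M →ₗ[k] M where
  toFun x := a • x
  map_add' := smul_add a
  map_smul' c x := (smul_comm c a x).symm

@[simp] lemma ell_apply (a : MonoidAlgebra k G) (x : M) : ell a x = a • x := rfl

instance : Module.Finite k (MonoidAlgebra k G) :=
  Module.Finite.equiv ((Finsupp.linearEquivFunOnFinite k k G).symm.trans (MonoidAlgebra.coeffLinearEquiv k).symm)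

lemma sg_left_mul {H : Subgroup G} {h : G} (hh : h ∈ H) :
    MonoidAlgebra.of k G h * sg k H = sg k H := by
  unfold sg
  rw [Finset.mul_sum]
  simp_rw [← map_mul]
  refine Finset.sum_equiv (Equiv.mulLeft h) ?_ ?_
  · intro i; simp [Set.mem_toFinset, H.mul_mem_cancel_left hh]
  · intro i _; rfl


/-- If `u∘u` kills `W` and `u W ≤ W` then `2 dim (u W) ≤ dim W`. -/
lemma la [Module.Finite k M] (u : M →ₗ[k] M) (W : Submodule k M)
    (h0 : ∀ x ∈ W, u (u x) = 0) (hsub : W.map u ≤ W) :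
    2 * finrank k (W.map u) ≤ finrank k W := by
  set f : W →ₗ[k] M := u.comp W.subtype with hf
  have hrange : LinearMap.range f = W.map u := by
    rw [hf, LinearMap.range_comp, Submodule.range_subtype]
  have hrn := LinearMap.finrank_range_add_finrank_ker f
  have hker : W.map u ≤ Submodule.map W.subtype (LinearMap.ker f) := by
    rw [hf, LinearMap.ker_comp, Submodule.map_comap_subtype]
    refine le_inf hsub ?_
    rintro x ⟨w, hw, rfl⟩
    exact h0 w hw
  have h1 : finrank k (W.map u) ≤ finrank k (LinearMap.ker f) := by
    calc finrank k (W.map u) ≤ finrank k (Submodule.map W.subtype (LinearMap.ker f)) :=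
          Submodule.finrank_mono hker
    _ = finrank k (LinearMap.ker f) := Submodule.finrank_map_subtype_eq W _
  have h2 : finrank k (LinearMap.range f) = finrank k (W.map u) := by rw [hrange]
  omega

section Coset
variable {H K : Subgroup G} {g : G}

lemma coset_decomp_left (hle : H ≤ K) (hg : g ∈ K) (hg' : g ∉ H)
    (hcard : Nat.card K = 2 * Nat.card H) :
    (H : Set G).toFinset ∪ (H : Set G).toFinset.image (g * ·) = (K : Set G).toFinset := by
  have hdisj : Disjoint ((H : Set G).toFinset) ((H : Set G).toFinset.image (g * ·)) := by
    rw [Finset.disjoint_left]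
    rintro x hx hx'
    obtain ⟨h, hh, rfl⟩ := Finset.mem_image.mp hx'
    rw [Set.mem_toFinset] at hx hh
    exact hg' (by simpa using H.mul_mem hx (H.inv_mem hh))
  have hsub : (H : Set G).toFinset ∪ (H : Set G).toFinset.image (g * ·) ⊆ (K : Set G).toFinset := by
    intro x hx
    rcases Finset.mem_union.mp hx with hx | hx
    · rw [Set.mem_toFinset] at hx ⊢; exact hle hx
    · obtain ⟨h, hh, rfl⟩ := Finset.mem_image.mp hx
      rw [Set.mem_toFinset] at hh ⊢
      exact K.mul_mem hg (hle hh)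
  have hcards : ((K : Set G).toFinset).card ≤
      ((H : Set G).toFinset ∪ (H : Set G).toFinset.image (g * ·)).card := by
    rw [Finset.card_union_of_disjoint hdisj,
      Finset.card_image_of_injective _ (mul_right_injective g)]
    have h1 : ((H : Set G).toFinset).card = Nat.card H := by
      simp [Set.toFinset_card, Nat.card_eq_fintype_card]
    have h2 : ((K : Set G).toFinset).card = Nat.card K := by
      simp [Set.toFinset_card, Nat.card_eq_fintype_card]
    omega
  exact Finset.eq_of_subset_of_card_le hsub hcards

lemma g_sq_mem (hle : H ≤ K) (hg : g ∈ K) (hg' : g ∉ H)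
    (hcard : Nat.card K = 2 * Nat.card H) : g * g ∈ H := by
  have h2 : g * g ∈ (K : Set G).toFinset := by rw [Set.mem_toFinset]; exact K.mul_mem hg hg
  rw [← coset_decomp_left hle hg hg' hcard] at h2
  rcases Finset.mem_union.mp h2 with hx | hx
  · rwa [Set.mem_toFinset] at hx
  · obtain ⟨h, hh, heq⟩ := Finset.mem_image.mp hx
    rw [Set.mem_toFinset] at hh
    have : g = h := mul_left_cancel heq.symm
    exact absurd (this ▸ hh) hg'

lemma coset_decomp_right (hle : H ≤ K) (hg : g ∈ K) (hg' : g ∉ H)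
    (hcard : Nat.card K = 2 * Nat.card H) :
    (H : Set G).toFinset ∪ (H : Set G).toFinset.image (· * g) = (K : Set G).toFinset := by
  have hdisj : Disjoint ((H : Set G).toFinset) ((H : Set G).toFinset.image (· * g)) := by
    rw [Finset.disjoint_left]
    rintro x hx hx'
    obtain ⟨h, hh, rfl⟩ := Finset.mem_image.mp hx'
    rw [Set.mem_toFinset] at hx hh
    exact hg' (by simpa using H.mul_mem (H.inv_mem hh) hx)
  have hsub : (H : Set G).toFinset ∪ (H : Set G).toFinset.image (· * g) ⊆ (K : Set G).toFinset := by
    intro x hx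
    rcases Finset.mem_union.mp hx with hx | hx
    · rw [Set.mem_toFinset] at hx ⊢; exact hle hx
    · obtain ⟨h, hh, rfl⟩ := Finset.mem_image.mp hx
      rw [Set.mem_toFinset] at hh ⊢
      exact K.mul_mem (hle hh) hg
  have hcards : ((K : Set G).toFinset).card ≤
      ((H : Set G).toFinset ∪ (H : Set G).toFinset.image (· * g)).card := by
    rw [Finset.card_union_of_disjoint hdisj,
      Finset.card_image_of_injective _ (mul_left_injective g)]
    have h1 : ((H : Set G).toFinset).card = Nat.card H := by
      simp [Set.toFinset_card, Nat.card_eq_fintype_card]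
    have h2 : ((K : Set G).toFinset).card = Nat.card K := by
      simp [Set.toFinset_card, Nat.card_eq_fintype_card]
    omega
  exact Finset.eq_of_subset_of_card_le hsub hcards

lemma sg_K_left (hle : H ≤ K) (hg : g ∈ K) (hg' : g ∉ H)
    (hcard : Nat.card K = 2 * Nat.card H) :
    sg k K = (1 + MonoidAlgebra.of k G g) * sg k H := by
  have hdisj : Disjoint ((H : Set G).toFinset) ((H : Set G).toFinset.image (g * ·)) := by
    rw [Finset.disjoint_left]
    rintro x hx hx'
    obtain ⟨h, hh, rfl⟩ := Finset.mem_image.mp hx'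
    rw [Set.mem_toFinset] at hx hh
    exact hg' (by simpa using H.mul_mem hx (H.inv_mem hh))
  rw [add_mul, one_mul]
  unfold sg
  rw [← coset_decomp_left hle hg hg' hcard, Finset.sum_union hdisj,
    Finset.sum_image (fun a _ b _ hab => mul_right_injective g hab), Finset.mul_sum]
  simp_rw [← map_mul]

lemma sg_K_right (hle : H ≤ K) (hg : g ∈ K) (hg' : g ∉ H)
    (hcard : Nat.card K = 2 * Nat.card H) :
    sg k K = sg k H * (1 + MonoidAlgebra.of k G g) := by
  have hdisj : Disjoint ((H : Set G).toFinset) ((H : Set G).toFinset.image (· * g)) := by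
    rw [Finset.disjoint_left]
    rintro x hx hx'
    obtain ⟨h, hh, rfl⟩ := Finset.mem_image.mp hx'
    rw [Set.mem_toFinset] at hx hh
    exact hg' (by simpa using H.mul_mem (H.inv_mem hh) hx)
  rw [mul_add, mul_one]
  unfold sg
  rw [← coset_decomp_right hle hg hg' hcard, Finset.sum_union hdisj,
    Finset.sum_image (fun a _ b _ hab => mul_left_injective g hab), Finset.sum_mul]
  simp_rw [← map_mul]

lemma sg_K_killed [CharP k 2] (hle : H ≤ K) (hg : g ∈ K) (hg' : g ∉ H)
    (hcard : Nat.card K = 2 * Nat.card H) :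
    (1 + MonoidAlgebra.of k G g) * sg k K = 0 := by
  have h2 : ∀ x : MonoidAlgebra k G, x + x = 0 := by
    intro x
    rw [← two_smul k x, show (2 : k) = 0 by exact_mod_cast CharP.cast_eq_zero k 2, zero_smul]
  rw [sg_K_left hle hg hg' hcard, ← mul_assoc]
  have hexp : (1 + MonoidAlgebra.of k G g) * (1 + MonoidAlgebra.of k G g) =
      1 + MonoidAlgebra.of k G (g * g) := by
    rw [map_mul]
    have h3 : (1 + MonoidAlgebra.of k G g) * (1 + MonoidAlgebra.of k G g) =
        (1 + MonoidAlgebra.of k G g * MonoidAlgebra.of k G g)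
          + (MonoidAlgebra.of k G g + MonoidAlgebra.of k G g) := by noncomm_ring
    rw [h3, h2, add_zero]
  rw [hexp, add_mul, one_mul, sg_left_mul (g_sq_mem hle hg hg' hcard), h2]
lemma step [CharP k 2] [Module.Finite k M] (hle : H ≤ K) (hg : g ∈ K)
    (hg' : g ∉ H) (hcard : Nat.card K = 2 * Nat.card H)
    (U : Submodule k M) (hU : ∀ (a : MonoidAlgebra k G), ∀ x ∈ U, a • x ∈ U) :
    2 * finrank k (U.map (ell (sg k K) : M →ₗ[k] M)) ≤
      finrank k (U.map (ell (sg k H) : M →ₗ[k] M)) := by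
  set u : M →ₗ[k] M := ell (1 + MonoidAlgebra.of k G g) with hu
  have key1 : U.map (ell (sg k K) : M →ₗ[k] M) = (U.map (ell (sg k H))).map u := by
    rw [← Submodule.map_comp]
    congr 1
    ext x
    simp only [ell_apply, LinearMap.comp_apply, hu]
    rw [← mul_smul, ← sg_K_left hle hg hg' hcard]
  have key2 : U.map (ell (sg k K) : M →ₗ[k] M) ≤ U.map (ell (sg k H)) := by
    rintro x ⟨y, hy, rfl⟩
    refine ⟨(1 + MonoidAlgebra.of k G g) • y, hU _ y hy, ?_⟩
    simp only [ell_apply]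
    rw [← mul_smul, ← sg_K_right hle hg hg' hcard]
  have key3 : ∀ x ∈ U.map (ell (sg k H) : M →ₗ[k] M), u (u x) = 0 := by
    rintro x ⟨y, hy, rfl⟩
    simp only [ell_apply, hu]
    rw [← mul_smul, ← mul_smul, mul_assoc, ← sg_K_left hle hg hg' hcard,
      sg_K_killed hle hg hg' hcard, zero_smul]
  rw [key1]
  exact la u _ key3 (key1 ▸ key2)
end Coset

lemma chain [CharP k 2] [Module.Finite k M] (m : ℕ) (hdvd : 2 ^ m ∣ Nat.card G) :
    ∃ P : Subgroup G, Nat.card P = 2 ^ m ∧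
      ∀ U : Submodule k M, (∀ (a : MonoidAlgebra k G), ∀ x ∈ U, a • x ∈ U) →
        2 ^ m * finrank k (U.map (ell (sg k P) : M →ₗ[k] M)) ≤ finrank k U := by
  haveI : Fact (Nat.Prime 2) := ⟨Nat.prime_two⟩
  induction m with
  | zero =>
    refine ⟨⊥, by simp, ?_⟩
    intro U hU
    have h1 : sg k (⊥ : Subgroup G) = 1 := by
      unfold sg
      rw [show ((⊥ : Subgroup G) : Set G).toFinset = {1} by ext x; simp]
      rw [Finset.sum_singleton, MonoidAlgebra.of_apply, MonoidAlgebra.one_def]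
    have h2 : (ell (1 : MonoidAlgebra k G) : M →ₗ[k] M) = LinearMap.id := by
      ext x; simp
    rw [h1, h2, Submodule.map_id, pow_zero, one_mul]
  | succ m ih =>
    obtain ⟨P, hPcard, hPbound⟩ := ih (dvd_trans (pow_dvd_pow 2 (Nat.le_succ m)) hdvd)
    obtain ⟨K, hKcard, hPK⟩ :=
      Sylow.exists_subgroup_card_pow_prime_le 2 hdvd P hPcard (Nat.le_succ m)
    have hne : P ≠ K := by
      intro h
      rw [h, hKcard] at hPcard
      have := Nat.pow_right_injective (le_refl 2) hPcard.symm
      omega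
    obtain ⟨g, hgK, hgP⟩ := SetLike.exists_of_lt (lt_of_le_of_ne hPK hne)
    have hcard2 : Nat.card K = 2 * Nat.card P := by rw [hKcard, hPcard, pow_succ]; ring
    refine ⟨K, hKcard, fun U hU => ?_⟩
    calc 2 ^ (m+1) * finrank k (U.map (ell (sg k K) : M →ₗ[k] M))
        = 2 ^ m * (2 * finrank k (U.map (ell (sg k K) : M →ₗ[k] M))) := by ring
      _ ≤ 2 ^ m * finrank k (U.map (ell (sg k P) : M →ₗ[k] M)) :=
          Nat.mul_le_mul_left _ (step hPK hgK hgP hcard2 U hU)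
      _ ≤ finrank k U := hPbound U hU
lemma sg_mul_of_apply (P : Subgroup G) (a b : G) :
    (sg k P * MonoidAlgebra.of k G a).coeff b = if b * a⁻¹ ∈ P then 1 else 0 := by
  unfold sg
  rw [Finset.sum_mul]
  simp_rw [MonoidAlgebra.of_apply, MonoidAlgebra.single_mul_single, one_mul]
  rw [MonoidAlgebra.coeff_sum, Finsupp.finset_sum_apply]
  simp_rw [MonoidAlgebra.coeff_single, Finsupp.single_apply]
  have hiff : ∀ h : G, (h * a = b) ↔ (h = b * a⁻¹) := by
    intro h; constructor
    · rintro rfl; rw [mul_inv_cancel_right]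
    · rintro rfl; rw [inv_mul_cancel_right]
  simp_rw [hiff]
  rw [Finset.sum_ite_eq' ((P : Set G).toFinset) (b * a⁻¹) (fun _ => (1 : k))]
  simp [Set.mem_toFinset]

lemma lower (P : Subgroup G) (n : ℕ) :
    n * Fintype.card G ≤ Nat.card P *
      finrank k ((⊤ : Submodule k (Fin n → MonoidAlgebra k G)).map
        (ell (sg k P) : (Fin n → MonoidAlgebra k G) →ₗ[k] (Fin n → MonoidAlgebra k G))) := by
  set J := Quotient (QuotientGroup.rightRel P) with hJ
  haveI : Fintype J := Fintype.ofFinite J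
  have htrans : ∀ j j' : J, (Quotient.out j' * (Quotient.out j)⁻¹ ∈ P) ↔ j = j' := by
    intro j j'
    constructor
    · intro h
      have h2 : (QuotientGroup.rightRel P) (Quotient.out j) (Quotient.out j') :=
        (QuotientGroup.rightRel_apply).mpr h
      have h3 := Quotient.sound' (s₁ := QuotientGroup.rightRel P) h2
      rwa [Quotient.mk''_eq_mk, Quotient.out_eq, Quotient.out_eq] at h3
    · rintro rfl
      simpa using P.one_mem
  set psi : (Fin n → MonoidAlgebra k G) →ₗ[k] (Fin n × J → k) :=
    { toFun := fun x p => (x p.1).coeff (Quotient.out p.2)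
      map_add' := fun x y => funext fun p => rfl
      map_smul' := fun c x => funext fun p => rfl } with hpsi
  have hsurj : Function.Surjective
      (psi ∘ₗ (ell (sg k P) : (Fin n → MonoidAlgebra k G) →ₗ[k] _)) := by
    intro c
    refine ⟨fun i => ∑ j : J, c (i, j) • MonoidAlgebra.of k G (Quotient.out j), ?_⟩
    funext p
    obtain ⟨i, j₀⟩ := p
    simp only [LinearMap.comp_apply, ell_apply, hpsi, LinearMap.coe_mk, AddHom.coe_mk]
    rw [Pi.smul_apply, smul_eq_mul, Finset.mul_sum, MonoidAlgebra.coeff_sum, Finsupp.finset_sum_apply]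
    have hmsc : ∀ (s : k) (x y : MonoidAlgebra k G), x * s • y = s • (x * y) :=
      fun s x y => mul_smul_comm s x y
    simp_rw [hmsc]
    have happ : ∀ (s : k) (y : MonoidAlgebra k G) (b : G), (s • y).coeff b = s * y.coeff b := fun _ _ _ => rfl
    simp_rw [happ, sg_mul_of_apply, htrans, mul_ite, mul_one, mul_zero]
    rw [Finset.sum_ite_eq' Finset.univ j₀ (fun j => c (i, j))]
    simp
  have hrange : LinearMap.range (psi ∘ₗ (ell (sg k P) :
      (Fin n → MonoidAlgebra k G) →ₗ[k] _)) = ⊤ := LinearMap.range_eq_top.mpr hsurj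
  rw [LinearMap.range_comp] at hrange
  have hW : (⊤ : Submodule k (Fin n → MonoidAlgebra k G)).map
      (ell (sg k P) : (Fin n → MonoidAlgebra k G) →ₗ[k] _)
      = LinearMap.range (ell (sg k P) : (Fin n → MonoidAlgebra k G) →ₗ[k] _) :=
    Submodule.map_top _
  rw [hW]
  have hfr : finrank k (Fin n × J → k) ≤
      finrank k (LinearMap.range (ell (sg k P) : (Fin n → MonoidAlgebra k G) →ₗ[k] _)) := by
    calc finrank k (Fin n × J → k) = finrank k (⊤ : Submodule k (Fin n × J → k)) :=
          (finrank_top k _).symm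
      _ = finrank k ((LinearMap.range (ell (sg k P) :
            (Fin n → MonoidAlgebra k G) →ₗ[k] _)).map psi) := by rw [hrange]
      _ ≤ _ := Submodule.finrank_map_le psi _
  have hcardJ : Fintype.card J * Nat.card P = Fintype.card G := by
    have h1 : Fintype.card J = Nat.card (G ⧸ P) := by
      rw [Nat.card_eq_fintype_card]
      exact Fintype.card_congr (QuotientGroup.quotientRightRelEquivQuotientLeftRel P)
    have h2 := Subgroup.card_eq_card_quotient_mul_card_subgroup (s := P)
    rw [h1, ← Nat.card_eq_fintype_card]
    omega
  have hfr2 : finrank k (Fin n × J → k) = n * Fintype.card J := by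
    rw [Module.finrank_fintype_fun_eq_card, Fintype.card_prod, Fintype.card_fin]
  calc n * Fintype.card G = n * (Fintype.card J * Nat.card P) := by rw [hcardJ]
    _ = Nat.card P * (n * Fintype.card J) := by ring
    _ = Nat.card P * finrank k (Fin n × J → k) := by rw [hfr2]
    _ ≤ _ := Nat.mul_le_mul_left _ hfr

lemma not_projective (k G : Type) [Field k] [CharP k 2] [Group G] [Fintype G]
    (hdvd : (2:ℕ) ^ 14 ∣ Fintype.card G)
    (M : Type) [AddCommGroup M] [Module k M] [Module (MonoidAlgebra k G) M]
    [IsScalarTower k (MonoidAlgebra k G) M] [Module.Finite k M]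
    (hrank : finrank k M = 10113024) : ¬ Module.Projective (MonoidAlgebra k G) M := by
  intro hproj
  haveI : Module.Finite (MonoidAlgebra k G) M :=
    Module.Finite.of_restrictScalars_finite k (MonoidAlgebra k G) M
  obtain ⟨nn, pi', hpisurj⟩ := Module.Finite.exists_fin' (MonoidAlgebra k G) M
  obtain ⟨s, hs⟩ := Module.projective_lifting_property pi' LinearMap.id hpisurj
  set F := Fin nn → MonoidAlgebra k G with hF
  set e : F →ₗ[k] F := (s ∘ₗ pi').restrictScalars k with he
  have heapp : ∀ x : F, e x = s (pi' x) := fun x => rfl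
  have hretr : ∀ m : M, pi' (s m) = m := fun m => LinearMap.congr_fun hs m
  have he2 : ∀ x, e (e x) = e x := by
    intro x; simp only [heapp, hretr]
  have heA : ∀ (a : MonoidAlgebra k G) (x : F), e (a • x) = a • e x := by
    intro a x; simp only [heapp, map_smul]
  set Q := LinearMap.range e with hQdef
  set K := LinearMap.ker e with hKdef
  have hQ : ∀ (a : MonoidAlgebra k G), ∀ x ∈ Q, a • x ∈ Q := by
    rintro a x ⟨y, rfl⟩
    exact ⟨a • y, heA a y⟩
  have hK : ∀ (a : MonoidAlgebra k G), ∀ x ∈ K, a • x ∈ K := by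
    intro a x hx
    rw [LinearMap.mem_ker] at hx ⊢
    rw [heA, hx, smul_zero]
  have hrn : finrank k Q + finrank k K = finrank k F :=
    LinearMap.finrank_range_add_finrank_ker e
  obtain ⟨P, hPcard, hbound⟩ := chain (k := k) (G := G) (M := F) 14
    (by rw [Nat.card_eq_fintype_card]; exact hdvd)
  have hlow := lower (k := k) P nn
  -- decomposition of the image of ⊤
  set L : F →ₗ[k] F := ell (sg k P) with hL
  have htop : (⊤ : Submodule k F).map L = Q.map L ⊔ K.map L := by
    apply le_antisymm
    · rintro x ⟨y, -, rfl⟩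
      have h2 : y - e y ∈ K := by
        rw [LinearMap.mem_ker, map_sub, he2, sub_self]
      have hsplit : L y = L (e y) + L (y - e y) := by
        rw [← map_add]; congr 1; abel
      rw [hsplit]
      exact add_mem (mem_sup_left ⟨e y, ⟨y, rfl⟩, rfl⟩) (mem_sup_right ⟨y - e y, h2, rfl⟩)
    · exact sup_le (Submodule.map_mono le_top) (Submodule.map_mono le_top)
  have hQle : Q.map L ≤ Q := by rintro x ⟨y, hy, rfl⟩; exact hQ (sg k P) y hy
  have hKle : K.map L ≤ K := by rintro x ⟨y, hy, rfl⟩; exact hK (sg k P) y hy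
  have hdisjQK : Disjoint Q K := by
    rw [disjoint_iff]
    ext x
    simp only [Submodule.mem_inf, Submodule.mem_bot]
    constructor
    · rintro ⟨⟨y, rfl⟩, hk⟩
      rw [LinearMap.mem_ker] at hk
      rw [← he2 y, hk]
    · rintro rfl; simp
  have hdisj2 : Disjoint (Q.map L) (K.map L) := hdisjQK.mono hQle hKle
  have hsum : finrank k ((⊤ : Submodule k F).map L) =
      finrank k (Q.map L) + finrank k (K.map L) := by
    have h := Submodule.finrank_sup_add_finrank_inf_eq (Q.map L) (K.map L)
    rw [hdisj2.eq_bot] at h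
    simp only [finrank_bot, add_zero] at h
    rw [htop, h]
  have hb1 := hbound Q hQ
  have hb2 := hbound K hK
  have hFrank : finrank k F = nn * Fintype.card G := by
    have h : finrank k (Fin nn → MonoidAlgebra k G) = nn * Fintype.card G := by
      rw [Module.finrank_pi_fintype, Finset.sum_const, Finset.card_univ, Fintype.card_fin,
        smul_eq_mul]
      congr 1
      exact Module.finrank_eq_card_basis (MonoidAlgebra.basis G k)
    exact h
  -- finrank Q = finrank M
  have hsinj : Function.Injective s := Function.LeftInverse.injective hretr
  have hQM : finrank k Q = finrank k M := by
    have hQr : Q = LinearMap.range (s.restrictScalars k) := by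
      apply le_antisymm
      · rintro x ⟨y, rfl⟩; exact ⟨pi' y, rfl⟩
      · rintro x ⟨m, rfl⟩
        exact ⟨s m, by simp only [heapp, hretr]; rfl⟩
    rw [hQr]
    exact LinearMap.finrank_range_of_inj (f := s.restrictScalars k) hsinj
  -- final arithmetic
  rw [hPcard] at hlow
  rw [hsum] at hlow
  have h2pow : (2:ℕ) ^ 14 = 16384 := by norm_num
  rw [h2pow] at hlow hb1 hb2
  rw [hQM, hrank] at hb1
  rw [hFrank] at hrn
  rw [hQM, hrank] at hrn
  omega

end RuAux
end RuAux

/-- The degree of the Lefschetz character of the Rudvalis group, `10113024`, equals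
`2^12 · 2469`, while `|Ru|_2 = 2^14`; hence the Lefschetz module of `Ru` is not
projective mod 2 (by the `p`-test). -/
theorem ru_lefschetz_not_projective :
    ((10113024 : ℕ) = 2 ^ 12 * 2469 ∧ ¬ ((2:ℕ) ^ 14 ∣ 10113024)) ∧
    (∀ (k : Type) [Field k] [CharP k 2] (G : Type) [Group G] [Fintype G],
      (2 : ℕ) ^ 14 ∣ Fintype.card G →
      ∀ (M : Type) [AddCommGroup M] [Module k M] [Module (MonoidAlgebra k G) M]
        [IsScalarTower k (MonoidAlgebra k G) M] [Module.Finite k M],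
      Module.finrank k M = 10113024 →
      ¬ Module.Projective (MonoidAlgebra k G) M) := by
  refine ⟨⟨by norm_num, by norm_num⟩, ?_⟩
  intro k _ _ G _ _ hdvd M _ _ _ _ _ hrank
  exact RuAux.not_projective k G hdvd M hrank
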